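/- Consider the configuration-model mean-field system with inertia δ = 0 and suppose α·f_max < β·e_min (out-group hate dominates in-group love in every degree bin). Let c be a real number with 1/2 < c < 1. Then the family defined by θ^B_{f,e}(t) = θ^R_{f,e}(t) = c·e^{−t} for all (f,e) ∈ I is a solution of the system on the interval [0, ln(2c)) with initial value c in every bin, and c·e^{−t} → 1/2 as t → ln(2c) from the left (non-partisan polarization, with every degree bin of each group approaching an equal split between the two choices). -/

import Mathlib

open Set Filter

/-- Friend-weighted fraction with choice-1:
`P_F(t) = (Σ_{(f,e)} f·P_{f,e}·θ_{f,e}(t)) / (Σ_{(f,e)} f·P_{f,e})`,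
where `(f,e)` ranges over the index set `[fmin, fmax] × [emin, emax]`. -/
noncomputable def cfgPF (fmin fmax emin emax : ℕ) (P : ℕ → ℕ → ℝ)
    (θ : ℕ → ℕ → ℝ → ℝ) (t : ℝ) : ℝ :=
  (∑ f ∈ Finset.Icc fmin fmax, ∑ e ∈ Finset.Icc emin emax, (f : ℝ) * P f e * θ f e t) /
    (∑ f ∈ Finset.Icc fmin fmax, ∑ e ∈ Finset.Icc emin emax, (f : ℝ) * P f e)

/-- Enemy-weighted fraction with choice-1:
`P_E(t) = (Σ_{(f,e)} e·P_{f,e}·θ_{f,e}(t)) / (Σ_{(f,e)} e·P_{f,e})`. -/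
noncomputable def cfgPE (fmin fmax emin emax : ℕ) (P : ℕ → ℕ → ℝ)
    (θ : ℕ → ℕ → ℝ → ℝ) (t : ℝ) : ℝ :=
  (∑ f ∈ Finset.Icc fmin fmax, ∑ e ∈ Finset.Icc emin emax, (e : ℝ) * P f e * θ f e t) /
    (∑ f ∈ Finset.Icc fmin fmax, ∑ e ∈ Finset.Icc emin emax, (e : ℝ) * P f e)

/-- `g^B_{f,e}(t) = α·(f/(f+e))·(2P_F^B(t)−1) − β·(e/(f+e))·(2P_E^B(t)−1)`, where
`P_F^B` is the friend-weighted blue fraction and `P_E^B` the enemy-weighted red fraction. -/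
noncomputable def cfgGB (fmin fmax emin emax : ℕ) (PB PR : ℕ → ℕ → ℝ)
    (θB θR : ℕ → ℕ → ℝ → ℝ) (α β : ℝ) (f e : ℕ) (t : ℝ) : ℝ :=
  α * ((f : ℝ) / ((f : ℝ) + (e : ℝ))) * (2 * cfgPF fmin fmax emin emax PB θB t - 1)
    - β * ((e : ℝ) / ((f : ℝ) + (e : ℝ))) * (2 * cfgPE fmin fmax emin emax PR θR t - 1)

/-- `g^R_{f,e}(t) = α·(f/(f+e))·(2P_F^R(t)−1) − β·(e/(f+e))·(2P_E^R(t)−1)`, where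
`P_F^R` is the friend-weighted red fraction and `P_E^R` the enemy-weighted blue fraction. -/
noncomputable def cfgGR (fmin fmax emin emax : ℕ) (PB PR : ℕ → ℕ → ℝ)
    (θB θR : ℕ → ℕ → ℝ → ℝ) (α β : ℝ) (f e : ℕ) (t : ℝ) : ℝ :=
  α * ((f : ℝ) / ((f : ℝ) + (e : ℝ))) * (2 * cfgPF fmin fmax emin emax PR θR t - 1)
    - β * ((e : ℝ) / ((f : ℝ) + (e : ℝ))) * (2 * cfgPE fmin fmax emin emax PB θB t - 1)

/-- Right-hand side of the blue equation in bin `(f,e)`: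
`(1−θ^B_{f,e})·𝟙[g^B_{f,e}(t) > 0] − θ^B_{f,e}·𝟙[g^B_{f,e}(t) < 0]`. -/
noncomputable def cfgRhsB (fmin fmax emin emax : ℕ) (PB PR : ℕ → ℕ → ℝ)
    (θB θR : ℕ → ℕ → ℝ → ℝ) (α β : ℝ) (f e : ℕ) (t : ℝ) : ℝ :=
  (1 - θB f e t) * (if 0 < cfgGB fmin fmax emin emax PB PR θB θR α β f e t then 1 else 0)
    - θB f e t * (if cfgGB fmin fmax emin emax PB PR θB θR α β f e t < 0 then 1 else 0)

/-- Right-hand side of the red equation in bin `(f,e)`: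
`(1−θ^R_{f,e})·𝟙[g^R_{f,e}(t) > 0] − θ^R_{f,e}·𝟙[g^R_{f,e}(t) < 0]`. -/
noncomputable def cfgRhsR (fmin fmax emin emax : ℕ) (PB PR : ℕ → ℕ → ℝ)
    (θB θR : ℕ → ℕ → ℝ → ℝ) (α β : ℝ) (f e : ℕ) (t : ℝ) : ℝ :=
  (1 - θR f e t) * (if 0 < cfgGR fmin fmax emin emax PB PR θB θR α β f e t then 1 else 0)
    - θR f e t * (if cfgGR fmin fmax emin emax PB PR θB θR α β f e t < 0 then 1 else 0)

/-- The family `(θ^B_{f,e}, θ^R_{f,e})_{(f,e) ∈ [fmin,fmax] × [emin,emax]}` is a solution of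
the configuration-model mean-field system (inertia `δ = 0`) on the set `J`. -/
def IsCfgSolutionOn (fmin fmax emin emax : ℕ) (PB PR : ℕ → ℕ → ℝ)
    (θB θR : ℕ → ℕ → ℝ → ℝ) (α β : ℝ) (J : Set ℝ) : Prop :=
  ∀ f ∈ Finset.Icc fmin fmax, ∀ e ∈ Finset.Icc emin emax, ∀ t ∈ J,
    HasDerivWithinAt (θB f e)
      (cfgRhsB fmin fmax emin emax PB PR θB θR α β f e t) J t ∧
    HasDerivWithinAt (θR f e)
      (cfgRhsR fmin fmax emin emax PB PR θB θR α β f e t) J t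


lemma cfg_sum_pos {a b : ℕ} (ha : 1 ≤ a) (hab : a ≤ b) {emin emax : ℕ}
    (hee : emin ≤ emax) (P : ℕ → ℕ → ℝ)
    (hP : ∀ f ∈ Finset.Icc a b, ∀ e ∈ Finset.Icc emin emax, 0 < P f e) :
    0 < ∑ f ∈ Finset.Icc a b, ∑ e ∈ Finset.Icc emin emax, (f : ℝ) * P f e := by
  apply Finset.sum_pos
  · intro f hf
    apply Finset.sum_pos
    · intro e he
      have hf1 : 1 ≤ f := le_trans ha (Finset.mem_Icc.mp hf).1
      have : (0:ℝ) < f := by exact_mod_cast Nat.lt_of_lt_of_le Nat.zero_lt_one hf1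
      exact mul_pos this (hP f hf e he)
    · exact Finset.nonempty_Icc.mpr hee
  · exact Finset.nonempty_Icc.mpr hab

lemma cfg_const_avg {a b emin emax : ℕ} (P : ℕ → ℕ → ℝ) (φ : ℝ)
    (hpos : 0 < ∑ f ∈ Finset.Icc a b, ∑ e ∈ Finset.Icc emin emax, (f : ℝ) * P f e) :
    (∑ f ∈ Finset.Icc a b, ∑ e ∈ Finset.Icc emin emax, (f : ℝ) * P f e * φ) /
      (∑ f ∈ Finset.Icc a b, ∑ e ∈ Finset.Icc emin emax, (f : ℝ) * P f e) = φ := by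
  have : (∑ f ∈ Finset.Icc a b, ∑ e ∈ Finset.Icc emin emax, (f : ℝ) * P f e * φ)
      = (∑ f ∈ Finset.Icc a b, ∑ e ∈ Finset.Icc emin emax, (f : ℝ) * P f e) * φ := by
    rw [Finset.sum_mul]
    exact Finset.sum_congr rfl fun f _ => by rw [Finset.sum_mul]
  rw [this]; exact mul_div_cancel_left₀ φ hpos.ne'

/-- In the configuration-model mean-field system with `δ = 0`, if
`α·f_max < β·e_min` (out-group hate dominates in every bin) and `1/2 < c < 1`, then the
family `θ^B_{f,e}(t) = θ^R_{f,e}(t) = c·e^{−t}` is a solution on `[0, ln(2c))` with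
initial value `c` in every bin, and `c·e^{−t} → 1/2` as `t → ln(2c)⁻`
(non-partisan polarization). -/
theorem cfg_nonpartisan_trajectory
    (fmin fmax emin emax : ℕ)
    (hf1 : 1 ≤ fmin) (hf2 : fmin ≤ fmax) (he1 : 1 ≤ emin) (he2 : emin ≤ emax)
    (PB PR : ℕ → ℕ → ℝ)
    (hPB : ∀ f ∈ Finset.Icc fmin fmax, ∀ e ∈ Finset.Icc emin emax, 0 < PB f e)
    (hPR : ∀ f ∈ Finset.Icc fmin fmax, ∀ e ∈ Finset.Icc emin emax, 0 < PR f e)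
    (α β : ℝ) (hα : α ∈ Set.Icc (0:ℝ) 1) (hβ : β ∈ Set.Icc (0:ℝ) 1)
    (hdom : α * (fmax : ℝ) < β * (emin : ℝ))
    (c : ℝ) (hc1 : 1 / 2 < c) (hc2 : c < 1) :
    IsCfgSolutionOn fmin fmax emin emax PB PR
      (fun _ _ t => c * Real.exp (-t)) (fun _ _ t => c * Real.exp (-t)) α β
      (Set.Ico 0 (Real.log (2 * c))) ∧
    c * Real.exp (-(0:ℝ)) = c ∧
    Filter.Tendsto (fun t => c * Real.exp (-t))
      (nhdsWithin (Real.log (2 * c)) (Set.Iio (Real.log (2 * c))))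
      (nhds (1 / 2 : ℝ)) := by

  have h2c : (1:ℝ) < 2 * c := by linarith
  have hc0 : (0:ℝ) < c := by linarith
  -- value of θ in (1/2, …) on the interval
  have hθhalf : ∀ t ∈ Set.Ico (0:ℝ) (Real.log (2 * c)), 1 / 2 < c * Real.exp (-t) := by
    intro t ht
    have h1 : Real.exp (-t) > Real.exp (-(Real.log (2 * c))) :=
      Real.exp_lt_exp.mpr (by linarith [ht.2])
    have h2 : Real.exp (-(Real.log (2 * c))) = 1 / (2 * c) := by
      rw [Real.exp_neg, Real.exp_log (by linarith)]
      ring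
    rw [h2] at h1
    have := (div_lt_iff₀ (by linarith : (0:ℝ) < 2 * c)).mp h1
    nlinarith
  refine ⟨?_, by simp, ?_⟩
  · intro f hf e he t ht
    have hfm := Finset.mem_Icc.mp hf
    have hem := Finset.mem_Icc.mp he
    have hf0 : (0:ℝ) < f := by exact_mod_cast Nat.lt_of_lt_of_le Nat.zero_lt_one (le_trans hf1 hfm.1)
    have he0 : (0:ℝ) < e := by exact_mod_cast Nat.lt_of_lt_of_le Nat.zero_lt_one (le_trans he1 hem.1)
    -- weighted averages equal c e^{-t}
    have hPFB : cfgPF fmin fmax emin emax PB (fun _ _ t => c * Real.exp (-t)) t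
        = c * Real.exp (-t) :=
      cfg_const_avg PB _ (cfg_sum_pos hf1 hf2 he2 PB hPB)
    have hPFR : cfgPF fmin fmax emin emax PR (fun _ _ t => c * Real.exp (-t)) t
        = c * Real.exp (-t) :=
      cfg_const_avg PR _ (cfg_sum_pos hf1 hf2 he2 PR hPR)
    have hPB' : ∀ e ∈ Finset.Icc emin emax, ∀ f ∈ Finset.Icc fmin fmax, 0 < PB f e :=
      fun e he f hf => hPB f hf e he
    have hPR' : ∀ e ∈ Finset.Icc emin emax, ∀ f ∈ Finset.Icc fmin fmax, 0 < PR f e :=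
      fun e he f hf => hPR f hf e he
    have hswap : ∀ (P : ℕ → ℕ → ℝ) (φ : ℝ),
        (∑ f ∈ Finset.Icc fmin fmax, ∑ e ∈ Finset.Icc emin emax, (e : ℝ) * P f e * φ)
        = ∑ e ∈ Finset.Icc emin emax, ∑ f ∈ Finset.Icc fmin fmax,
            (e : ℝ) * (fun e f => P f e) e f * φ := fun P φ => Finset.sum_comm
    have hPEB : cfgPE fmin fmax emin emax PB (fun _ _ t => c * Real.exp (-t)) t
        = c * Real.exp (-t) := by
      unfold cfgPE
      rw [Finset.sum_comm (γ := ℕ)]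
      rw [show (∑ e ∈ Finset.Icc emin emax, ∑ f ∈ Finset.Icc fmin fmax,
          (e : ℝ) * PB f e * ((fun _ _ t => c * Real.exp (-t)) f e t))
        = ∑ e ∈ Finset.Icc emin emax, ∑ f ∈ Finset.Icc fmin fmax,
          (e : ℝ) * (fun e f => PB f e) e f * (c * Real.exp (-t)) from rfl]
      rw [show (∑ f ∈ Finset.Icc fmin fmax, ∑ e ∈ Finset.Icc emin emax, (e : ℝ) * PB f e)
        = ∑ e ∈ Finset.Icc emin emax, ∑ f ∈ Finset.Icc fmin fmax,
          (e : ℝ) * (fun e f => PB f e) e f from Finset.sum_comm]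
      exact cfg_const_avg _ _ (cfg_sum_pos he1 he2 hf2 _ hPB')
    have hPER : cfgPE fmin fmax emin emax PR (fun _ _ t => c * Real.exp (-t)) t
        = c * Real.exp (-t) := by
      unfold cfgPE
      rw [show (∑ f ∈ Finset.Icc fmin fmax, ∑ e ∈ Finset.Icc emin emax,
          (e : ℝ) * PR f e * ((fun _ _ t => c * Real.exp (-t)) f e t))
        = ∑ e ∈ Finset.Icc emin emax, ∑ f ∈ Finset.Icc fmin fmax,
          (e : ℝ) * (fun e f => PR f e) e f * (c * Real.exp (-t)) from Finset.sum_comm]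
      rw [show (∑ f ∈ Finset.Icc fmin fmax, ∑ e ∈ Finset.Icc emin emax, (e : ℝ) * PR f e)
        = ∑ e ∈ Finset.Icc emin emax, ∑ f ∈ Finset.Icc fmin fmax,
          (e : ℝ) * (fun e f => PR f e) e f from Finset.sum_comm]
      exact cfg_const_avg _ _ (cfg_sum_pos he1 he2 hf2 _ hPR')
    -- g is negative
    have hθ := hθhalf t ht
    have hαf : α * (f : ℝ) < β * (e : ℝ) := by
      have h1 : α * (f : ℝ) ≤ α * (fmax : ℝ) :=
        mul_le_mul_of_nonneg_left (by exact_mod_cast hfm.2) hα.1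
      have h2 : β * (emin : ℝ) ≤ β * (e : ℝ) :=
        mul_le_mul_of_nonneg_left (by exact_mod_cast hem.1) hβ.1
      linarith
    have hfe : (0:ℝ) < (f : ℝ) + (e : ℝ) := by linarith
    have hgB : cfgGB fmin fmax emin emax PB PR
        (fun _ _ t => c * Real.exp (-t)) (fun _ _ t => c * Real.exp (-t)) α β f e t < 0 := by
      unfold cfgGB
      rw [hPFB, hPER]
      have key : α * ((f : ℝ) / ((f : ℝ) + (e : ℝ))) * (2 * (c * Real.exp (-t)) - 1)
          - β * ((e : ℝ) / ((f : ℝ) + (e : ℝ))) * (2 * (c * Real.exp (-t)) - 1)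
          = (α * (f : ℝ) - β * (e : ℝ)) * (2 * (c * Real.exp (-t)) - 1) / ((f : ℝ) + (e : ℝ)) := by
        field_simp
      rw [key]
      apply div_neg_of_neg_of_pos _ hfe
      apply mul_neg_of_neg_of_pos (by linarith) (by linarith)
    have hgR : cfgGR fmin fmax emin emax PB PR
        (fun _ _ t => c * Real.exp (-t)) (fun _ _ t => c * Real.exp (-t)) α β f e t < 0 := by
      unfold cfgGR
      rw [hPFR, hPEB]
      have key : α * ((f : ℝ) / ((f : ℝ) + (e : ℝ))) * (2 * (c * Real.exp (-t)) - 1)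
          - β * ((e : ℝ) / ((f : ℝ) + (e : ℝ))) * (2 * (c * Real.exp (-t)) - 1)
          = (α * (f : ℝ) - β * (e : ℝ)) * (2 * (c * Real.exp (-t)) - 1) / ((f : ℝ) + (e : ℝ)) := by
        field_simp
      rw [key]
      apply div_neg_of_neg_of_pos _ hfe
      apply mul_neg_of_neg_of_pos (by linarith) (by linarith)
    have hderiv : HasDerivWithinAt (fun t => c * Real.exp (-t)) (-(c * Real.exp (-t)))
        (Set.Ico 0 (Real.log (2 * c))) t := by
      have h1 : HasDerivAt (fun t : ℝ => Real.exp (-t)) (-Real.exp (-t)) t := by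
        simpa using (hasDerivAt_neg t).exp
      simpa [mul_comm] using ((h1.const_mul c).hasDerivWithinAt)
    constructor
    · have : cfgRhsB fmin fmax emin emax PB PR
          (fun _ _ t => c * Real.exp (-t)) (fun _ _ t => c * Real.exp (-t)) α β f e t
          = -(c * Real.exp (-t)) := by
        unfold cfgRhsB
        rw [if_neg (by linarith), if_pos hgB]; ring
      rw [this]; exact hderiv
    · have : cfgRhsR fmin fmax emin emax PB PR
          (fun _ _ t => c * Real.exp (-t)) (fun _ _ t => c * Real.exp (-t)) α β f e t
          = -(c * Real.exp (-t)) := by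
        unfold cfgRhsR
        rw [if_neg (by linarith), if_pos hgR]; ring
      rw [this]; exact hderiv
  · have hcont : Filter.Tendsto (fun t => c * Real.exp (-t))
        (nhds (Real.log (2 * c))) (nhds (c * Real.exp (-(Real.log (2 * c))))) := by
      exact (continuous_const.mul (Real.continuous_exp.comp continuous_neg)).tendsto _
    have hval : c * Real.exp (-(Real.log (2 * c))) = 1 / 2 := by
      rw [Real.exp_neg, Real.exp_log (by linarith)]
      field_simp
    rw [hval] at hcont
    exact hcont.mono_left nhdsWithin_le_nhds
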